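/- Bound on the total null e-value mass under approximate pairwise exchangeability (Theorem 3, part (a)). Let (Ω, 𝓕, ℙ) be a probability space, m ≥ 1, H₀ ⊆ [m], α ∈ (0,1). Let G_1,…,G_m be real random variables, τ = inf{ λ ∈ {|G_1|,…,|G_m|} : (1 + Σ_j 1{G_j ≤ −λ}) / max(Σ_j 1{G_j ≥ λ}, 1) ≤ α } (τ = +∞ if the set is empty), and e_i = m·1{G_i ≥ τ}/(1 + Σ_j 1{G_j ≤ −τ}) with e_i = 0 when τ = +∞. Let (K̂L_i)_{i∈H₀} be real random variables (the observed KL divergences). Assume that for every i ∈ H₀ and every ε ≥ 0, almost surely E[ 1{G_i > 0, K̂L_i ≤ ε} | 𝓖_i ] ≤ e^ε · E[ 1{G_i < 0} | 𝓖_i ], where 𝓖_i is the σ-algebra generated by |G_i| and (G_j)_{j≠i}. Then E[ Σ_{i∈H₀} e_i ] ≤ inf_{ε ≥ 0} m·[ e^ε + Σ_{i∈H₀} ℙ( K̂L_i > ε ) ]. -/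

import Mathlib

open MeasureTheory
open scoped Classical

namespace MirrorAux
variable {m : ℕ}

noncomputable def nNum (g : Fin m → ℝ) (x : ℝ) : ℕ := (Finset.univ.filter fun j => g j ≤ -x).card
noncomputable def nDen (g : Fin m → ℝ) (x : ℝ) : ℕ := (Finset.univ.filter fun j => x ≤ g j).card

def fdpOK (α : ℝ) (g : Fin m → ℝ) (x : ℝ) : Prop :=
  ((1 : ℝ) + (nNum g x : ℝ)) / max ((nDen g x : ℝ)) 1 ≤ α

def validSet (α : ℝ) (g : Fin m → ℝ) : Set ℝ := {x : ℝ | (∃ i, |g i| = x) ∧ fdpOK α g x}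

end MirrorAux

/-- The mirror threshold `τ`: the infimum (in the extended reals, `+∞` when the set is
empty) of the values `λ ∈ {|G 1|, …, |G m|}` at which the mirror FDP estimate
`(1 + #{j : G j ≤ −λ}) / max(#{j : G j ≥ λ}, 1)` is at most `α`. -/
noncomputable def mirrorThreshold {m : ℕ} (α : ℝ) (G : Fin m → ℝ) : EReal :=
  sInf ((fun x : ℝ => (x : EReal)) ''
    {x : ℝ | (∃ i, |G i| = x) ∧
      ((1 : ℝ) + ((Finset.univ.filter fun j => G j ≤ -x).card : ℝ)) /
        max ((Finset.univ.filter fun j => x ≤ G j).card : ℝ) 1 ≤ α})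

namespace MirrorAux

lemma threshold_def (α : ℝ) (g : Fin m → ℝ) :
    mirrorThreshold α g = sInf ((fun x : ℝ => (x : EReal)) '' validSet α g) := rfl

lemma validSet_nonneg {α : ℝ} {g : Fin m → ℝ} {x : ℝ} (h : x ∈ validSet α g) : 0 ≤ x := by
  obtain ⟨⟨i, hi⟩, -⟩ := h; exact hi ▸ abs_nonneg _

lemma threshold_nonneg (α : ℝ) (g : Fin m → ℝ) : (0 : EReal) ≤ mirrorThreshold α g := by
  rw [threshold_def]
  refine le_sInf fun b hb => ?_
  obtain ⟨x, hx, rfl⟩ := hb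
  exact EReal.coe_nonneg.2 (validSet_nonneg hx)

lemma threshold_attain {α : ℝ} {g : Fin m → ℝ} (h : mirrorThreshold α g ≠ ⊤) :
    ∃ x : ℝ, x ∈ validSet α g ∧ ((x : EReal) = mirrorThreshold α g) := by
  have hfin : ((fun x : ℝ => (x : EReal)) '' validSet α g).Finite := by
    refine Set.Finite.image _ (((Set.finite_range fun i => |g i|)).subset ?_)
    rintro x ⟨⟨i, hi⟩, -⟩; exact ⟨i, hi⟩
  have hne : ((fun x : ℝ => (x : EReal)) '' validSet α g).Nonempty := by
    by_contra h'
    rw [Set.not_nonempty_iff_eq_empty] at h'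
    exact h (by rw [threshold_def, h', sInf_empty])
  have := hne.csInf_mem hfin
  rw [← threshold_def] at this
  obtain ⟨x, hx, hxe⟩ := this
  exact ⟨x, hx, hxe⟩

lemma threshold_le {α : ℝ} {g : Fin m → ℝ} {x : ℝ} (h : x ∈ validSet α g) :
    mirrorThreshold α g ≤ (x : EReal) := by
  rw [threshold_def]; exact sInf_le ⟨x, h, rfl⟩

end MirrorAux

namespace MirrorAux

noncomputable def flip (i : Fin m) (g : Fin m → ℝ) : Fin m → ℝ := Function.update g i |g i|

lemma flip_apply_ne {i j : Fin m} (g : Fin m → ℝ) (h : j ≠ i) : flip i g j = g j :=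
  Function.update_of_ne h _ _

lemma flip_apply_self (i : Fin m) (g : Fin m → ℝ) : flip i g i = |g i| :=
  Function.update_self _ _ _

lemma abs_flip (i j : Fin m) (g : Fin m → ℝ) : |flip i g j| = |g j| := by
  by_cases h : j = i
  · subst h; rw [flip_apply_self, abs_abs]
  · rw [flip_apply_ne g h]

lemma flip_of_pos {i : Fin m} {g : Fin m → ℝ} (h : 0 < g i) : flip i g = g := by
  unfold flip; rw [abs_of_pos h]; exact Function.update_eq_self _ _

lemma sum_split (i k : Fin m) (h : k ≠ i) (F : Fin m → ℕ) :
    ∑ j, F j = ∑ j ∈ (Finset.univ.erase i).erase k, F j + F k + F i := by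
  rw [Finset.sum_erase_add _ _ (Finset.mem_erase.2 ⟨h, Finset.mem_univ k⟩),
    Finset.sum_erase_add _ _ (Finset.mem_univ i)]

lemma filter_card_eq_swap (p : ℝ → Prop) {i k : Fin m} (hik : i ≠ k) (u v : Fin m → ℝ)
    (hoff : ∀ j, j ≠ i → j ≠ k → u j = v j)
    (h1 : p (u i) ↔ p (v k)) (h2 : p (u k) ↔ p (v i)) :
    (Finset.univ.filter fun j => p (u j)).card = (Finset.univ.filter fun j => p (v j)).card := by
  classical
  rw [Finset.card_filter, Finset.card_filter, sum_split i k hik.symm, sum_split i k hik.symm]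
  have hS : ∑ j ∈ (Finset.univ.erase i).erase k, (if p (u j) then 1 else 0)
      = ∑ j ∈ (Finset.univ.erase i).erase k, (if p (v j) then 1 else 0) := by
    refine Finset.sum_congr rfl fun j hj => ?_
    have hjk := (Finset.mem_erase.1 hj).1
    have hji := (Finset.mem_erase.1 (Finset.mem_erase.1 hj).2).1
    rw [hoff j hji hjk]
  have e1 : (if p (u i) then 1 else 0) = (if p (v k) then 1 else 0) := if_congr h1 rfl rfl
  have e2 : (if p (u k) then 1 else 0) = (if p (v i) then 1 else 0) := if_congr h2 rfl rfl
  rw [hS, e1, e2]; ring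

/-- The swap lemma: the key combinatorial step. -/
lemma swap_bound (α : ℝ) {g : Fin m → ℝ} {i k : Fin m} (hik : i ≠ k)
    (hi : g i < 0) (hk : g k < 0)
    (hti : mirrorThreshold α (flip i g) ≤ ((|g i| : ℝ) : EReal))
    (htk : mirrorThreshold α (flip k g) ≤ ((|g k| : ℝ) : EReal)) :
    mirrorThreshold α (flip i g) ≤ ((|g k| : ℝ) : EReal) := by
  by_contra hlt
  have hne : mirrorThreshold α (flip k g) ≠ ⊤ :=
    (lt_of_le_of_lt htk (EReal.coe_lt_top _)).ne
  obtain ⟨x, hxv, hxe⟩ := threshold_attain hne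
  have hx_le : x ≤ |g k| := by
    rw [← EReal.coe_le_coe_iff]; rw [hxe]; exact htk
  have hx0 : 0 ≤ x := validSet_nonneg hxv
  have hgk_lt_gi : |g k| < |g i| := by
    by_contra hcon
    push_neg at hcon
    exact hlt (hti.trans (EReal.coe_le_coe_iff.2 hcon))
  have hxlt : x < |g i| := lt_of_le_of_lt hx_le hgk_lt_gi
  have habsi : 0 < |g i| := abs_pos.2 hi.ne
  have habsk : 0 < |g k| := abs_pos.2 hk.ne
  have hgi : g i = -|g i| := by rw [abs_of_neg hi, neg_neg]
  have hgk : g k = -|g k| := by rw [abs_of_neg hk, neg_neg]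
  -- transfer validity of x from `flip k g` to `flip i g`
  have hoff : ∀ j, j ≠ i → j ≠ k → flip i g j = flip k g j := fun j hji hjk => by
    rw [flip_apply_ne g hji, flip_apply_ne g hjk]
  have hnum : nNum (flip i g) x = nNum (flip k g) x := by
    refine filter_card_eq_swap (fun y => y ≤ -x) hik _ _ hoff ?_ ?_
    · rw [flip_apply_self, flip_apply_self]
      constructor <;> intro h <;> linarith
    · rw [flip_apply_ne g hik.symm, flip_apply_ne g hik]
      constructor <;> intro h <;> linarith
  have hden : nDen (flip i g) x = nDen (flip k g) x := by
    refine filter_card_eq_swap (fun y => x ≤ y) hik _ _ hoff ?_ ?_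
    · rw [flip_apply_self, flip_apply_self]
      constructor <;> intro h <;> linarith
    · rw [flip_apply_ne g hik.symm, flip_apply_ne g hik]
      constructor <;> intro h <;> linarith
  have hmem : x ∈ validSet α (flip i g) := by
    obtain ⟨⟨j, hj⟩, hok⟩ := hxv
    refine ⟨⟨j, by rw [abs_flip]; rw [abs_flip] at hj; exact hj⟩, ?_⟩
    unfold fdpOK at hok ⊢
    rw [hnum, hden]; exact hok
  exact hlt ((threshold_le hmem).trans (EReal.coe_le_coe_iff.2 hx_le))

end MirrorAux

namespace MirrorAux

lemma flip_zero (α : ℝ) {g : Fin m → ℝ} {i : Fin m}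
    (h0 : mirrorThreshold α g ≤ (0 : EReal)) (hi : g i < 0) :
    mirrorThreshold α (flip i g) ≤ (0 : EReal) := by
  have hne : mirrorThreshold α g ≠ ⊤ := (lt_of_le_of_lt h0 (lt_of_lt_of_le zero_lt_one le_top)).ne
  obtain ⟨x, hxv, hxe⟩ := threshold_attain hne
  have hx0 : 0 ≤ x := validSet_nonneg hxv
  have hxle : x ≤ 0 := by
    rw [← EReal.coe_le_coe_iff (y := (0 : ℝ))]
    rw [hxe]; exact_mod_cast h0
  have hx : x = 0 := le_antisymm hxle hx0
  subst hx
  have hmem : (0:ℝ) ∈ validSet α (flip i g) := by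
    obtain ⟨⟨j, hj⟩, hok⟩ := hxv
    refine ⟨⟨j, by rw [abs_flip]; exact hj⟩, ?_⟩
    unfold fdpOK nNum nDen at hok ⊢
    have hnum : ((Finset.univ.filter fun j => flip i g j ≤ -(0:ℝ)).card : ℝ)
        ≤ ((Finset.univ.filter fun j => g j ≤ -(0:ℝ)).card : ℝ) := by
      refine Nat.cast_le.2 (Finset.card_le_card ?_)
      intro j hj
      simp only [Finset.mem_filter, Finset.mem_univ, true_and] at hj ⊢
      by_cases hji : j = i
      · subst hji; exact le_of_lt (by simpa using hi)
      · rwa [flip_apply_ne g hji] at hj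
    have hden : ((Finset.univ.filter fun j => (0:ℝ) ≤ g j).card : ℝ)
        ≤ ((Finset.univ.filter fun j => (0:ℝ) ≤ flip i g j).card : ℝ) := by
      refine Nat.cast_le.2 (Finset.card_le_card ?_)
      intro j hj
      simp only [Finset.mem_filter, Finset.mem_univ, true_and] at hj ⊢
      by_cases hji : j = i
      · subst hji; rw [flip_apply_self]; exact abs_nonneg _
      · rwa [flip_apply_ne g hji]
    refine le_trans ?_ hok
    refine div_le_div₀ (by positivity) (by linarith) ?_ ?_
    · exact lt_of_lt_of_le zero_lt_one (le_max_right _ _)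
    · exact max_le_max hden le_rfl
  have := threshold_le hmem
  simpa using this

end MirrorAux

/-- The mirror e-values `e i = m·1{G i ≥ τ}/(1 + #{j : G j ≤ −τ})`; when `τ = +∞` the
indicator vanishes, so `e i = 0`. -/
noncomputable def mirrorEValue {m : ℕ} (α : ℝ) (G : Fin m → ℝ) (i : Fin m) : ℝ :=
  (m : ℝ) * (if mirrorThreshold α G ≤ (G i : EReal) then (1 : ℝ) else 0) /
    ((1 : ℝ) + ((Finset.univ.filter fun j =>
        (G j : EReal) ≤ -(mirrorThreshold α G)).card : ℝ))

namespace MirrorAux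

noncomputable def cE (α : ℝ) (g : Fin m → ℝ) : ℕ :=
  (Finset.univ.filter fun j => (g j : EReal) ≤ -(mirrorThreshold α g)).card

noncomputable def qfun (α : ℝ) (i : Fin m) (g : Fin m → ℝ) : ℝ :=
  (if mirrorThreshold α g ≤ (g i : EReal) then (1 : ℝ) else 0) / (1 + (cE α g : ℝ))

noncomputable def Afun (α : ℝ) (g : Fin m → ℝ) (i : Fin m) : ℝ := qfun α i (flip i g)

noncomputable def Zfun (α : ℝ) (g : Fin m → ℝ) (i : Fin m) : ℝ :=
  (if g i = 0 ∧ mirrorThreshold α g ≤ (0 : EReal) then (1 : ℝ) else 0) / (1 + (cE α g : ℝ))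

lemma cE_pos_den (α : ℝ) (g : Fin m → ℝ) : (0:ℝ) < 1 + (cE α g : ℝ) := by positivity

lemma qfun_nonneg (α : ℝ) (i : Fin m) (g : Fin m → ℝ) : 0 ≤ qfun α i g := by
  unfold qfun; positivity

lemma qfun_le_one (α : ℝ) (i : Fin m) (g : Fin m → ℝ) : qfun α i g ≤ 1 := by
  unfold qfun
  rw [div_le_one (cE_pos_den α g)]
  split
  · simp
  · positivity

lemma Afun_nonneg (α : ℝ) (g : Fin m → ℝ) (i : Fin m) : 0 ≤ Afun α g i := qfun_nonneg _ _ _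
lemma Afun_le_one (α : ℝ) (g : Fin m → ℝ) (i : Fin m) : Afun α g i ≤ 1 := qfun_le_one _ _ _

lemma Zfun_nonneg (α : ℝ) (g : Fin m → ℝ) (i : Fin m) : 0 ≤ Zfun α g i := by
  unfold Zfun; positivity

lemma mirrorEValue_eq (α : ℝ) (g : Fin m → ℝ) (i : Fin m) :
    mirrorEValue α g i = (m : ℝ) * (qfun α i g) := by
  unfold mirrorEValue qfun cE
  rw [mul_div_assoc]

/-- The pointwise decomposition (P1). -/
lemma evalue_decomp (α : ℝ) (g : Fin m → ℝ) (i : Fin m) :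
    mirrorEValue α g i
      = (m : ℝ) * (Afun α g i * (if 0 < g i then 1 else 0)) + (m : ℝ) * Zfun α g i := by
  rw [mirrorEValue_eq]
  rcases lt_trichotomy (g i) 0 with hneg | hzero | hpos
  · have h1 : ¬ (mirrorThreshold α g ≤ (g i : EReal)) := by
      intro h
      have h2 : (g i : EReal) < 0 := by exact_mod_cast EReal.coe_lt_coe_iff.2 hneg
      exact absurd ((threshold_nonneg α g).trans h) (not_le.2 (by exact_mod_cast h2))
    have h3 : ¬ (0 < g i) := not_lt.2 hneg.le
    have h4 : ¬ (g i = 0 ∧ mirrorThreshold α g ≤ (0 : EReal)) := fun h => hneg.ne h.1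
    unfold qfun Zfun
    rw [if_neg h1, if_neg h3, if_neg h4]
    simp
  · have h3 : ¬ (0 < g i) := by rw [hzero]; exact lt_irrefl 0
    unfold qfun Zfun
    rw [if_neg h3, hzero]
    have : ((0:ℝ) : EReal) = (0 : EReal) := rfl
    rw [this]
    simp only [true_and, mul_zero, mul_zero, zero_add]
  · have h3 : (0 : ℝ) < g i := hpos
    have h4 : ¬ (g i = 0 ∧ mirrorThreshold α g ≤ (0 : EReal)) := fun h => hpos.ne' h.1
    unfold Afun Zfun
    rw [if_pos h3, if_neg h4, flip_of_pos hpos]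
    unfold qfun
    ring

end MirrorAux

namespace MirrorAux

lemma coe_neg_abs {x : ℝ} (hx : x < 0) : (x : EReal) = -((|x| : ℝ) : EReal) := by
  rw [abs_of_neg hx]
  rw [show ((-x : ℝ) : EReal) = -(x : EReal) from EReal.coe_neg x, neg_neg]

/-- The master deterministic counting inequality (P2). -/
lemma master (α : ℝ) (g : Fin m → ℝ) :
    ∑ i : Fin m, (Afun α g i * (if g i < 0 then 1 else 0) + Zfun α g i) ≤ 1 := by
  rw [Finset.sum_add_distrib]
  by_cases hτ : mirrorThreshold α g ≤ (0 : EReal)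
  · -- Case A : the threshold is zero
    set Neg := Finset.univ.filter (fun i : Fin m => g i < 0) with hNeg
    set Z := Finset.univ.filter (fun i : Fin m => g i = 0) with hZ
    set n := Neg.card with hn
    set z := Z.card with hz
    have hA : ∀ i : Fin m, Afun α g i * (if g i < 0 then 1 else 0)
        ≤ if g i < 0 then 1/((n:ℝ)+(z:ℝ)) else 0 := by
      intro i
      by_cases hi : g i < 0
      · rw [if_pos hi, if_pos hi, mul_one]
        have ht' := flip_zero α hτ hi
        have hneg' : (0 : EReal) ≤ -(mirrorThreshold α (flip i g)) := by
          refine EReal.le_neg_of_le_neg ?_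
          rw [neg_zero]; exact ht'
        have hiNeg : i ∈ Neg := by simp [hNeg, hi]
        have hsub : (Neg.erase i) ∪ Z ⊆ Finset.univ.filter
            fun j => ((flip i g j : ℝ) : EReal) ≤ -(mirrorThreshold α (flip i g)) := by
          intro j hj
          have hjne : j ≠ i ∧ g j ≤ 0 := by
            rcases Finset.mem_union.1 hj with h | h
            · have h' := Finset.mem_erase.1 h
              refine ⟨h'.1, le_of_lt ?_⟩
              simpa [hNeg] using h'.2
            · have h' : g j = 0 := by simpa [hZ] using h
              exact ⟨fun he => hi.ne (he ▸ h'), h'.le⟩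
          simp only [Finset.mem_filter, Finset.mem_univ, true_and]
          rw [flip_apply_ne g hjne.1]
          refine le_trans ?_ hneg'
          exact_mod_cast EReal.coe_nonpos.2 hjne.2
        have hdisj : Disjoint (Neg.erase i) Z := by
          refine Finset.disjoint_left.2 fun j hj hjZ => ?_
          have h1 : g j < 0 := by
            have := (Finset.mem_erase.1 hj).2; simpa [hNeg] using this
          have h2 : g j = 0 := by simpa [hZ] using hjZ
          exact h1.ne h2
        have hcard : n + z ≤ 1 + cE α (flip i g) := by
          have h1 := Finset.card_le_card hsub
          rw [Finset.card_union_of_disjoint hdisj, Finset.card_erase_of_mem hiNeg] at h1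
          have hn1 : 1 ≤ n := Finset.card_pos.2 ⟨i, hiNeg⟩
          unfold cE
          omega
        have hnz : (0:ℝ) < (n:ℝ) + z := by
          have hn1 : 1 ≤ n := Finset.card_pos.2 ⟨i, hiNeg⟩
          have : (1:ℝ) ≤ (n:ℝ) := by exact_mod_cast hn1
          positivity
        unfold Afun qfun
        refine div_le_div₀ zero_le_one (by split <;> norm_num) hnz ?_
        exact_mod_cast hcard
      · rw [if_neg hi, if_neg hi, mul_zero]
    have hZb : ∀ i : Fin m, Zfun α g i ≤ if g i = 0 then 1/(1+(n:ℝ)+(z:ℝ)) else 0 := by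
      intro i
      by_cases hi : g i = 0
      · rw [if_pos hi]
        unfold Zfun
        rw [if_pos ⟨hi, hτ⟩]
        have hneg' : (0 : EReal) ≤ -(mirrorThreshold α g) := by
          refine EReal.le_neg_of_le_neg ?_; rw [neg_zero]; exact hτ
        have hsub : Neg ∪ Z ⊆ Finset.univ.filter
            fun j => ((g j : ℝ) : EReal) ≤ -(mirrorThreshold α g) := by
          intro j hj
          have hjle : g j ≤ 0 := by
            rcases Finset.mem_union.1 hj with h | h
            · exact le_of_lt (by simpa [hNeg] using h)
            · exact le_of_eq (by simpa [hZ] using h)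
          simp only [Finset.mem_filter, Finset.mem_univ, true_and]
          refine le_trans ?_ hneg'
          exact_mod_cast EReal.coe_nonpos.2 hjle
        have hdisj : Disjoint Neg Z := by
          refine Finset.disjoint_left.2 fun j hj hjZ => ?_
          have h1 : g j < 0 := by simpa [hNeg] using hj
          have h2 : g j = 0 := by simpa [hZ] using hjZ
          exact h1.ne h2
        have hcard : n + z ≤ cE α g := by
          have h1 := Finset.card_le_card hsub
          rw [Finset.card_union_of_disjoint hdisj] at h1
          unfold cE
          omega
        rw [div_le_div_iff₀ (cE_pos_den α g) (by positivity)]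
        have : (n:ℝ) + z ≤ (cE α g : ℝ) := by exact_mod_cast hcard
        linarith
      · unfold Zfun
        rw [if_neg (fun h => hi h.1), if_neg hi, zero_div]
    calc ∑ i : Fin m, Afun α g i * (if g i < 0 then 1 else 0)
          + ∑ i : Fin m, Zfun α g i
        ≤ ∑ i : Fin m, (if g i < 0 then 1/((n:ℝ)+(z:ℝ)) else 0)
          + ∑ i : Fin m, (if g i = 0 then 1/(1+(n:ℝ)+(z:ℝ)) else 0) :=
        add_le_add (Finset.sum_le_sum fun i _ => hA i) (Finset.sum_le_sum fun i _ => hZb i)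
      _ = (n:ℝ) * (1/((n:ℝ)+(z:ℝ))) + (z:ℝ) * (1/(1+(n:ℝ)+(z:ℝ))) := by
        rw [← Finset.sum_filter, ← Finset.sum_filter, Finset.sum_const, Finset.sum_const,
          nsmul_eq_mul, nsmul_eq_mul]
      _ ≤ 1 := by
        rcases Nat.eq_zero_or_pos (n + z) with h0 | hpos
        · have hn0 : n = 0 := by omega
          have hz0 : z = 0 := by omega
          simp [hn0, hz0]
        · have hpos' : (0:ℝ) < (n:ℝ) + z := by exact_mod_cast Nat.cast_pos.2 hpos
          have h2 : (1:ℝ)/(1+(n:ℝ)+(z:ℝ)) ≤ 1/((n:ℝ)+(z:ℝ)) :=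
            one_div_le_one_div_of_le hpos' (by linarith)
          have h3 : (n:ℝ) * (1/((n:ℝ)+(z:ℝ))) + (z:ℝ) * (1/((n:ℝ)+(z:ℝ))) = 1 := by
            field_simp
          have h4 : (z:ℝ) * (1/(1+(n:ℝ)+(z:ℝ))) ≤ (z:ℝ) * (1/((n:ℝ)+(z:ℝ))) :=
            mul_le_mul_of_nonneg_left h2 (Nat.cast_nonneg z)
          linarith
  · -- Case B : positive threshold, use the swap lemma
    have hZ0 : ∀ i : Fin m, Zfun α g i = 0 := fun i => by
      unfold Zfun; rw [if_neg (fun h => hτ h.2), zero_div]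
    rw [Finset.sum_congr rfl (fun i _ => hZ0 i), Finset.sum_const_zero, add_zero]
    set T := Finset.univ.filter
      (fun i : Fin m => g i < 0 ∧ mirrorThreshold α (flip i g) ≤ ((|g i| : ℝ) : EReal)) with hT
    set t := T.card with ht
    have hA : ∀ i : Fin m, Afun α g i * (if g i < 0 then 1 else 0)
        ≤ if i ∈ T then 1/(t:ℝ) else 0 := by
      intro i
      by_cases hiT : i ∈ T
      · rw [if_pos hiT]
        obtain ⟨hi, hti⟩ : g i < 0 ∧ _ := by simpa [hT] using hiT
        rw [if_pos hi, mul_one]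
        have hsub : T.erase i ⊆ Finset.univ.filter
            fun j => ((flip i g j : ℝ) : EReal) ≤ -(mirrorThreshold α (flip i g)) := by
          intro k hk
          obtain ⟨hki, hkT⟩ := Finset.mem_erase.1 hk
          obtain ⟨hk0, htk⟩ : g k < 0 ∧ _ := by simpa [hT] using hkT
          have hswap := swap_bound α (Ne.symm hki) hi hk0 hti htk
          simp only [Finset.mem_filter, Finset.mem_univ, true_and]
          rw [flip_apply_ne g hki, coe_neg_abs hk0]
          rw [EReal.neg_le, neg_neg]
          exact hswap
        have hcard : t ≤ 1 + cE α (flip i g) := by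
          have h1 := Finset.card_le_card hsub
          rw [Finset.card_erase_of_mem hiT] at h1
          have ht1 : 1 ≤ t := Finset.card_pos.2 ⟨i, hiT⟩
          unfold cE
          omega
        have htpos : (0:ℝ) < (t:ℝ) := by
          exact_mod_cast Nat.cast_pos.2 (Finset.card_pos.2 ⟨i, hiT⟩)
        unfold Afun qfun
        refine div_le_div₀ zero_le_one (by split <;> norm_num) htpos ?_
        exact_mod_cast hcard
      · rw [if_neg hiT]
        by_cases hi : g i < 0
        · have hnot : ¬ (mirrorThreshold α (flip i g) ≤ ((|g i| : ℝ) : EReal)) := fun h =>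
            hiT (by simp [hT, hi, h])
          rw [if_pos hi, mul_one]
          unfold Afun qfun
          rw [show flip i g i = |g i| from flip_apply_self i g, if_neg hnot, zero_div]
        · rw [if_neg hi, mul_zero]
    calc ∑ i : Fin m, Afun α g i * (if g i < 0 then 1 else 0)
        ≤ ∑ i : Fin m, (if i ∈ T then 1/(t:ℝ) else 0) :=
        Finset.sum_le_sum fun i _ => hA i
      _ = (t:ℝ) * (1/(t:ℝ)) := by
        rw [← Finset.sum_filter, Finset.sum_const, nsmul_eq_mul]
        rw [Finset.filter_univ_mem]
      _ ≤ 1 := by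
        rcases Nat.eq_zero_or_pos t with h0 | hpos
        · simp [h0]
        · have hne : (t:ℝ) ≠ 0 := by
            exact_mod_cast Nat.pos_iff_ne_zero.1 hpos
          rw [mul_one_div, div_self hne]

end MirrorAux

namespace MirrorAux

lemma card_filter_real (p : Fin m → Prop) :
    ((Finset.univ.filter p).card : ℝ) = ∑ j, if p j then (1:ℝ) else 0 := by
  rw [Finset.card_filter]
  push_cast [apply_ite (fun n : ℕ => (n : ℝ))]
  rfl

lemma threshold_eq_iInf (α : ℝ) (g : Fin m → ℝ) :
    mirrorThreshold α g
      = ⨅ i : Fin m, (if fdpOK α g (|g i|) then ((|g i| : ℝ) : EReal) else ⊤) := by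
  rw [threshold_def]
  apply le_antisymm
  · refine le_iInf fun i => ?_
    by_cases h : fdpOK α g (|g i|)
    · rw [if_pos h]; exact sInf_le ⟨|g i|, ⟨⟨i, rfl⟩, h⟩, rfl⟩
    · rw [if_neg h]; exact le_top
  · refine le_sInf fun b hb => ?_
    obtain ⟨x, ⟨⟨i, hxi⟩, hok⟩, rfl⟩ := hb
    refine iInf_le_of_le i ?_
    rw [hxi, if_pos hok]

lemma measurable_threshold (α : ℝ) : Measurable fun g : Fin m → ℝ => mirrorThreshold α g := by
  have hnum : ∀ i : Fin m, Measurable fun g : Fin m → ℝ => ((nNum g (|g i|) : ℝ)) := by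
    intro i
    have h : (fun g : Fin m → ℝ => ((nNum g (|g i|) : ℝ)))
        = fun g => ∑ j, if g j ≤ -|g i| then (1:ℝ) else 0 := by
      funext g; rw [nNum, card_filter_real]
    rw [h]
    refine Finset.measurable_sum _ fun j _ => ?_
    refine Measurable.ite ?_ measurable_const measurable_const
    exact measurableSet_le (measurable_pi_apply j) ((measurable_pi_apply i).abs.neg)
  have hden : ∀ i : Fin m, Measurable fun g : Fin m → ℝ => ((nDen g (|g i|) : ℝ)) := by
    intro i
    have h : (fun g : Fin m → ℝ => ((nDen g (|g i|) : ℝ)))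
        = fun g => ∑ j, if |g i| ≤ g j then (1:ℝ) else 0 := by
      funext g; rw [nDen, card_filter_real]
    rw [h]
    refine Finset.measurable_sum _ fun j _ => ?_
    refine Measurable.ite ?_ measurable_const measurable_const
    exact measurableSet_le ((measurable_pi_apply i).abs) (measurable_pi_apply j)
  have hset : ∀ i : Fin m, MeasurableSet {g : Fin m → ℝ | fdpOK α g (|g i|)} := by
    intro i
    have : {g : Fin m → ℝ | fdpOK α g (|g i|)}
        = {g : Fin m → ℝ |
            (1 + ((nNum g (|g i|) : ℝ))) / max ((nDen g (|g i|) : ℝ)) 1 ≤ α} := rfl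
    rw [this]
    exact measurableSet_le
      ((measurable_const.add (hnum i)).div ((hden i).max measurable_const)) measurable_const
  have heq : (fun g : Fin m → ℝ => mirrorThreshold α g)
      = fun g => ⨅ i : Fin m, (if fdpOK α g (|g i|) then ((|g i| : ℝ) : EReal) else ⊤) :=
    funext (threshold_eq_iInf α)
  rw [heq]
  exact Measurable.iInf fun i => Measurable.ite (hset i)
    (measurable_coe_real_ereal.comp (measurable_pi_apply i).abs) measurable_const

lemma measurable_neg_threshold (α : ℝ) :
    Measurable fun g : Fin m → ℝ => -(mirrorThreshold α g) :=
  continuous_neg.measurable.comp (measurable_threshold α)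

lemma measurable_cE (α : ℝ) : Measurable fun g : Fin m → ℝ => ((cE α g : ℝ)) := by
  have h : (fun g : Fin m → ℝ => ((cE α g : ℝ)))
      = fun g => ∑ j, if (g j : EReal) ≤ -(mirrorThreshold α g) then (1:ℝ) else 0 := by
    funext g
    rw [cE, Finset.card_filter]
    push_cast [apply_ite (fun n : ℕ => (n : ℝ))]
    rfl
  rw [h]
  refine Finset.measurable_sum _ fun j _ => ?_
  refine Measurable.ite ?_ measurable_const measurable_const
  exact measurableSet_le (measurable_coe_real_ereal.comp (measurable_pi_apply j))
    (measurable_neg_threshold α)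

lemma measurable_qfun (α : ℝ) (i : Fin m) : Measurable (qfun α i) := by
  unfold qfun
  refine Measurable.div ?_ (measurable_const.add (measurable_cE α))
  refine Measurable.ite ?_ measurable_const measurable_const
  exact measurableSet_le (measurable_threshold α)
    (measurable_coe_real_ereal.comp (measurable_pi_apply i))

lemma measurable_flip (i : Fin m) : Measurable fun g : Fin m → ℝ => flip i g := by
  refine measurable_pi_lambda _ fun j => ?_
  by_cases hj : j = i
  · subst hj
    have h : (fun g : Fin m → ℝ => flip j g j) = fun g => |g j| :=
      funext fun g => flip_apply_self j g
    rw [h]; exact (measurable_pi_apply j).abs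
  · have h : (fun g : Fin m → ℝ => flip i g j) = fun g => g j :=
      funext fun g => flip_apply_ne g hj
    rw [h]; exact measurable_pi_apply j

lemma measurable_Afun (α : ℝ) (i : Fin m) : Measurable fun g : Fin m → ℝ => Afun α g i :=
  (measurable_qfun α i).comp (measurable_flip i)

lemma measurable_Zfun (α : ℝ) (i : Fin m) : Measurable fun g : Fin m → ℝ => Zfun α g i := by
  unfold Zfun
  refine Measurable.div ?_ (measurable_const.add (measurable_cE α))
  refine Measurable.ite ?_ measurable_const measurable_const
  have h : {g : Fin m → ℝ | g i = 0 ∧ mirrorThreshold α g ≤ (0 : EReal)}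
      = {g : Fin m → ℝ | g i = 0} ∩ {g : Fin m → ℝ | mirrorThreshold α g ≤ (0 : EReal)} := rfl
  rw [h]
  refine MeasurableSet.inter ?_ ?_
  · exact measurable_pi_apply i (measurableSet_singleton 0)
  · exact measurableSet_le (measurable_threshold α) measurable_const

lemma measurable_evalue (α : ℝ) (i : Fin m) :
    Measurable fun g : Fin m → ℝ => mirrorEValue α g i := by
  have h : (fun g : Fin m → ℝ => mirrorEValue α g i) = fun g => (m:ℝ) * qfun α i g :=
    funext fun g => mirrorEValue_eq α g i
  rw [h]; exact measurable_const.mul (measurable_qfun α i)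

end MirrorAux

namespace MirrorAux

lemma Zfun_le_one (α : ℝ) (g : Fin m → ℝ) (i : Fin m) : Zfun α g i ≤ 1 := by
  unfold Zfun
  rw [div_le_one (cE_pos_den α g)]
  split
  · simp
  · positivity

lemma flip_flip (i : Fin m) (g : Fin m → ℝ) : flip i (flip i g) = flip i g := by
  funext j
  by_cases hj : j = i
  · subst hj; rw [flip_apply_self, flip_apply_self, abs_abs]
  · rw [flip_apply_ne _ hj, flip_apply_ne _ hj]

lemma Afun_flip (α : ℝ) (g : Fin m → ℝ) (i : Fin m) : Afun α (flip i g) i = Afun α g i := by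
  unfold Afun
  rw [flip_flip]

def embed (i : Fin m) (p : ℝ × ({j : Fin m // j ≠ i} → ℝ)) : Fin m → ℝ :=
  fun j => if hj : j = i then p.1 else p.2 ⟨j, hj⟩

lemma measurable_embed (i : Fin m) : Measurable (embed i) := by
  refine measurable_pi_lambda _ fun j => ?_
  unfold embed
  by_cases hj : j = i
  · simp only [dif_pos hj]; exact measurable_fst
  · simp only [dif_neg hj]; exact (measurable_pi_apply _).comp measurable_snd

lemma embed_eq_flip (i : Fin m) (g : Fin m → ℝ) :
    embed i (|g i|, fun j : {j : Fin m // j ≠ i} => g j.1) = flip i g := by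
  funext j
  by_cases hj : j = i
  · subst hj; simp only [embed, flip_apply_self]; simp
  · simp only [embed, dif_neg hj, flip_apply_ne g hj]

end MirrorAux

/-- The σ-algebra generated by `|G i|` and `(G j)_{j ≠ i}`. -/
def sigmaG {Ω : Type*} [MeasurableSpace Ω] {m : ℕ} (G : Fin m → Ω → ℝ) (i : Fin m) :
    MeasurableSpace Ω :=
  MeasurableSpace.comap
    (fun ω => (|G i ω|, fun j : {j : Fin m // j ≠ i} => G j.1 ω)) inferInstance

open MirrorAux

/-- **Bound on the total null e-value mass under approximate pairwise exchangeability
(Theorem 3, part (a)).**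
If, for every null `i` and every `ε ≥ 0`, almost surely
`E[1{G i > 0, K̂L i ≤ ε} | σ(|G i|, (G j)_{j≠i})] ≤ e^ε · E[1{G i < 0} | σ(|G i|, (G j)_{j≠i})]`,
then `E[Σ_{i∈H₀} e i] ≤ inf_{ε ≥ 0} m·[e^ε + Σ_{i∈H₀} ℙ(K̂L i > ε)]`. -/
theorem null_evalue_mass_bound
    {Ω : Type*} [MeasurableSpace Ω] (P : Measure Ω) [IsProbabilityMeasure P]
    (m : ℕ) (hm : 1 ≤ m) (H0 : Finset (Fin m)) (α : ℝ) (hα : α ∈ Set.Ioo (0 : ℝ) 1)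
    (G : Fin m → Ω → ℝ) (hGmeas : ∀ i, Measurable (G i))
    (KL : Fin m → Ω → ℝ) (hKLmeas : ∀ i, Measurable (KL i))
    (hcond : ∀ i ∈ H0, ∀ ε : ℝ, 0 ≤ ε →
      ∀ᵐ ω ∂P,
        (P[(fun ω' => if 0 < G i ω' ∧ KL i ω' ≤ ε then (1 : ℝ) else 0) | sigmaG G i]) ω
          ≤ Real.exp ε *
            (P[(fun ω' => if G i ω' < 0 then (1 : ℝ) else 0) | sigmaG G i]) ω) :
    (∫ ω, ∑ i ∈ H0, mirrorEValue α (fun k => G k ω) i ∂P)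
      ≤ ⨅ ε : {ε : ℝ // 0 ≤ ε},
          (m : ℝ) * (Real.exp ε.1 + ∑ i ∈ H0, (P {ω | ε.1 < KL i ω}).toReal) := by
  classical
  haveI : Nonempty {ε : ℝ // 0 ≤ ε} := ⟨⟨0, le_rfl⟩⟩
  refine le_ciInf fun εp => ?_
  obtain ⟨ε, hε⟩ := εp
  show (∫ ω, ∑ i ∈ H0, mirrorEValue α (fun k => G k ω) i ∂P)
      ≤ (m : ℝ) * (Real.exp ε + ∑ i ∈ H0, (P {ω | ε < KL i ω}).toReal)
  have hgvm : Measurable fun ω => (fun k => G k ω) := measurable_pi_lambda _ hGmeas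
  -- integrability of bounded measurable functions
  have intbdd : ∀ (f : Ω → ℝ), Measurable f → ∀ c : ℝ, (∀ ω, |f ω| ≤ c) → Integrable f P := by
    intro f hf c h
    exact (integrable_const c).mono' hf.aestronglyMeasurable
      (Filter.Eventually.of_forall fun ω => by simpa [Real.norm_eq_abs] using h ω)
  -- measurability of components
  have hA_m : ∀ i, Measurable fun ω => Afun α (fun k => G k ω) i := fun i =>
    (measurable_Afun α i).comp hgvm
  have hZ_m : ∀ i, Measurable fun ω => Zfun α (fun k => G k ω) i := fun i =>
    (measurable_Zfun α i).comp hgvm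
  have he_m : ∀ i, Measurable fun ω => mirrorEValue α (fun k => G k ω) i := fun i =>
    (measurable_evalue α i).comp hgvm
  have hS1 : ∀ i, MeasurableSet {ω | 0 < G i ω ∧ KL i ω ≤ ε} := fun i =>
    (measurableSet_lt measurable_const (hGmeas i)).inter
      (measurableSet_le (hKLmeas i) measurable_const)
  have hS1' : ∀ i, MeasurableSet {ω | 0 < G i ω ∧ ε < KL i ω} := fun i =>
    (measurableSet_lt measurable_const (hGmeas i)).inter
      (measurableSet_lt measurable_const (hKLmeas i))
  have hS2 : ∀ i, MeasurableSet {ω | G i ω < 0} := fun i =>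
    measurableSet_lt (hGmeas i) measurable_const
  have hS3 : ∀ i, MeasurableSet {ω | ε < KL i ω} := fun i =>
    measurableSet_lt measurable_const (hKLmeas i)
  have hf1_m : ∀ i, Measurable fun ω => (if 0 < G i ω ∧ KL i ω ≤ ε then (1:ℝ) else 0) :=
    fun i => Measurable.ite (hS1 i) measurable_const measurable_const
  have hf1'_m : ∀ i, Measurable fun ω => (if 0 < G i ω ∧ ε < KL i ω then (1:ℝ) else 0) :=
    fun i => Measurable.ite (hS1' i) measurable_const measurable_const
  have hf2_m : ∀ i, Measurable fun ω => (if G i ω < 0 then (1:ℝ) else 0) :=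
    fun i => Measurable.ite (hS2 i) measurable_const measurable_const
  have hf3_m : ∀ i, Measurable fun ω => (if ε < KL i ω then (1:ℝ) else 0) :=
    fun i => Measurable.ite (hS3 i) measurable_const measurable_const
  have ind_abs : ∀ (p : Prop) [Decidable p], |if p then (1:ℝ) else 0| ≤ 1 := by
    intro p hp; split <;> simp
  have hf1_int : ∀ i, Integrable (fun ω => (if 0 < G i ω ∧ KL i ω ≤ ε then (1:ℝ) else 0)) P :=
    fun i => intbdd _ (hf1_m i) 1 fun ω => ind_abs _
  have hf1'_int : ∀ i, Integrable (fun ω => (if 0 < G i ω ∧ ε < KL i ω then (1:ℝ) else 0)) P :=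
    fun i => intbdd _ (hf1'_m i) 1 fun ω => ind_abs _
  have hf2_int : ∀ i, Integrable (fun ω => (if G i ω < 0 then (1:ℝ) else 0)) P :=
    fun i => intbdd _ (hf2_m i) 1 fun ω => ind_abs _
  have hf3_int : ∀ i, Integrable (fun ω => (if ε < KL i ω then (1:ℝ) else 0)) P :=
    fun i => intbdd _ (hf3_m i) 1 fun ω => ind_abs _
  have hA_abs : ∀ i ω, |Afun α (fun k => G k ω) i| ≤ 1 := fun i ω =>
    abs_le.2 ⟨by linarith [Afun_nonneg α (fun k => G k ω) i], Afun_le_one α (fun k => G k ω) i⟩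
  have hAf_int : ∀ (i : Fin m) (f : Ω → ℝ), Integrable f P →
      Integrable (fun ω => Afun α (fun k => G k ω) i * f ω) P := fun i f hf =>
    hf.bdd_mul (c := 1) (hA_m i).aestronglyMeasurable (Filter.Eventually.of_forall fun ω => by
      simpa [Real.norm_eq_abs] using hA_abs i ω)
  have hZ_int : ∀ i, Integrable (fun ω => Zfun α (fun k => G k ω) i) P := fun i =>
    intbdd _ (hZ_m i) 1 fun ω => abs_le.2 ⟨by linarith [Zfun_nonneg α (fun k => G k ω) i],
      Zfun_le_one α (fun k => G k ω) i⟩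
  have he_int : ∀ i, Integrable (fun ω => mirrorEValue α (fun k => G k ω) i) P := by
    intro i
    refine intbdd _ (he_m i) m fun ω => ?_
    rw [mirrorEValue_eq, abs_mul, abs_of_nonneg (Nat.cast_nonneg m)]
    have h1 := qfun_nonneg α i (fun k => G k ω)
    have h2 := qfun_le_one α i (fun k => G k ω)
    calc (m:ℝ) * |qfun α i (fun k => G k ω)| ≤ (m:ℝ) * 1 := by
          refine mul_le_mul_of_nonneg_left ?_ (Nat.cast_nonneg m)
          rw [abs_of_nonneg h1]; exact h2
      _ = m := mul_one _
  -- the conditional expectation step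
  have key : ∀ i ∈ H0,
      (∫ ω, Afun α (fun k => G k ω) i * (if 0 < G i ω ∧ KL i ω ≤ ε then (1:ℝ) else 0) ∂P)
        ≤ Real.exp ε *
          ∫ ω, Afun α (fun k => G k ω) i * (if G i ω < 0 then (1:ℝ) else 0) ∂P := by
    intro i hi
    have hφ : Measurable (fun ω => (|G i ω|, fun j : {j : Fin m // j ≠ i} => G j.1 ω)) :=
      ((hGmeas i).abs).prodMk (measurable_pi_lambda _ fun j => hGmeas j.1)
    have hle : sigmaG G i ≤ ‹MeasurableSpace Ω› := measurable_iff_comap_le.1 hφ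
    have hφG : @Measurable Ω (ℝ × ({j : Fin m // j ≠ i} → ℝ)) (sigmaG G i) _
        (fun ω => (|G i ω|, fun j : {j : Fin m // j ≠ i} => G j.1 ω)) :=
      fun s hs => ⟨s, hs, rfl⟩
    have hAeq : (fun ω => Afun α (fun k => G k ω) i)
        = (fun p : ℝ × ({j : Fin m // j ≠ i} → ℝ) => Afun α (embed i p) i)
          ∘ (fun ω => (|G i ω|, fun j : {j : Fin m // j ≠ i} => G j.1 ω)) := by
      funext ω
      simp only [Function.comp_apply]
      rw [← Afun_flip α (fun k => G k ω) i, ← embed_eq_flip i (fun k => G k ω)]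
    have hAsm : StronglyMeasurable[sigmaG G i] (fun ω => Afun α (fun k => G k ω) i) := by
      rw [hAeq]
      exact (((measurable_Afun α i).comp (measurable_embed i)).comp hφG).stronglyMeasurable
    have hpull1 : P[(fun ω => Afun α (fun k => G k ω) i
          * (if 0 < G i ω ∧ KL i ω ≤ ε then (1:ℝ) else 0)) | sigmaG G i]
        =ᵐ[P] fun ω => Afun α (fun k => G k ω) i
          * (P[(fun ω' => if 0 < G i ω' ∧ KL i ω' ≤ ε then (1:ℝ) else 0) | sigmaG G i]) ω :=
      condExp_mul_of_stronglyMeasurable_left hAsm (hAf_int i _ (hf1_int i)) (hf1_int i)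
    have hpull2 : P[(fun ω => Afun α (fun k => G k ω) i
          * (if G i ω < 0 then (1:ℝ) else 0)) | sigmaG G i]
        =ᵐ[P] fun ω => Afun α (fun k => G k ω) i
          * (P[(fun ω' => if G i ω' < 0 then (1:ℝ) else 0) | sigmaG G i]) ω :=
      condExp_mul_of_stronglyMeasurable_left hAsm (hAf_int i _ (hf2_int i)) (hf2_int i)
    have hcondint1 : Integrable (P[(fun ω' =>
        if 0 < G i ω' ∧ KL i ω' ≤ ε then (1:ℝ) else 0) | sigmaG G i]) P := integrable_condExp
    have hcondint2 : Integrable (P[(fun ω' =>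
        if G i ω' < 0 then (1:ℝ) else 0) | sigmaG G i]) P := integrable_condExp
    calc (∫ ω, Afun α (fun k => G k ω) i * (if 0 < G i ω ∧ KL i ω ≤ ε then (1:ℝ) else 0) ∂P)
        = ∫ ω, (P[(fun ω' => Afun α (fun k => G k ω') i
            * (if 0 < G i ω' ∧ KL i ω' ≤ ε then (1:ℝ) else 0)) | sigmaG G i]) ω ∂P :=
          (integral_condExp hle).symm
      _ = ∫ ω, Afun α (fun k => G k ω) i
            * (P[(fun ω' => if 0 < G i ω' ∧ KL i ω' ≤ ε then (1:ℝ) else 0) | sigmaG G i]) ω ∂P :=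
          integral_congr_ae hpull1
      _ ≤ ∫ ω, Afun α (fun k => G k ω) i * (Real.exp ε
            * (P[(fun ω' => if G i ω' < 0 then (1:ℝ) else 0) | sigmaG G i]) ω) ∂P := by
          refine integral_mono_ae ?_ ?_ ?_
          · exact hcondint1.bdd_mul (c := 1) (hA_m i).aestronglyMeasurable
              (Filter.Eventually.of_forall fun ω => by simpa [Real.norm_eq_abs] using hA_abs i ω)
          · exact (hcondint2.const_mul (Real.exp ε)).bdd_mul (c := 1) (hA_m i).aestronglyMeasurable
              (Filter.Eventually.of_forall fun ω => by simpa [Real.norm_eq_abs] using hA_abs i ω)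
          · filter_upwards [hcond i hi ε hε] with ω hω
            exact mul_le_mul_of_nonneg_left hω (Afun_nonneg α (fun k => G k ω) i)
      _ = Real.exp ε * ∫ ω, Afun α (fun k => G k ω) i
            * (P[(fun ω' => if G i ω' < 0 then (1:ℝ) else 0) | sigmaG G i]) ω ∂P := by
          rw [← integral_const_mul]
          refine integral_congr_ae (Filter.Eventually.of_forall fun ω => ?_)
          ring
      _ = Real.exp ε * ∫ ω, Afun α (fun k => G k ω) i
            * (if G i ω < 0 then (1:ℝ) else 0) ∂P := by
          congr 1
          rw [← integral_condExp hle (f := fun ω => Afun α (fun k => G k ω) i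
            * (if G i ω < 0 then (1:ℝ) else 0))]
          exact (integral_congr_ae hpull2).symm
  -- pointwise decomposition of the e-value
  have pos_split : ∀ (i : Fin m) (ω : Ω), (if 0 < G i ω then (1:ℝ) else 0)
      = (if 0 < G i ω ∧ KL i ω ≤ ε then (1:ℝ) else 0)
        + (if 0 < G i ω ∧ ε < KL i ω then (1:ℝ) else 0) := by
    intro i ω
    by_cases h1 : 0 < G i ω
    · by_cases h2 : KL i ω ≤ ε
      · rw [if_pos h1, if_pos ⟨h1, h2⟩, if_neg (fun h => absurd h.2 (not_lt.2 h2))]; ring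
      · rw [if_pos h1, if_neg (fun h => h2 h.2), if_pos ⟨h1, not_le.1 h2⟩]; ring
    · rw [if_neg h1, if_neg (fun h => h1 h.1), if_neg (fun h => h1 h.1)]; ring
  have e_decomp : ∀ (i : Fin m) (ω : Ω), mirrorEValue α (fun k => G k ω) i
      = (m:ℝ) * (Afun α (fun k => G k ω) i * (if 0 < G i ω ∧ KL i ω ≤ ε then (1:ℝ) else 0))
        + (m:ℝ) * (Afun α (fun k => G k ω) i * (if 0 < G i ω ∧ ε < KL i ω then (1:ℝ) else 0))
        + (m:ℝ) * Zfun α (fun k => G k ω) i := by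
    intro i ω
    have h := evalue_decomp α (fun k => G k ω) i
    rw [h, pos_split i ω]
    ring
  -- per-i integral identity
  have int_decomp : ∀ i : Fin m, (∫ ω, mirrorEValue α (fun k => G k ω) i ∂P)
      = (m:ℝ) * (∫ ω, Afun α (fun k => G k ω) i
          * (if 0 < G i ω ∧ KL i ω ≤ ε then (1:ℝ) else 0) ∂P)
        + (m:ℝ) * (∫ ω, Afun α (fun k => G k ω) i
          * (if 0 < G i ω ∧ ε < KL i ω then (1:ℝ) else 0) ∂P)
        + (m:ℝ) * (∫ ω, Zfun α (fun k => G k ω) i ∂P) := by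
    intro i
    rw [← integral_const_mul, ← integral_const_mul, ← integral_const_mul, ← integral_add, ← integral_add]
    · exact integral_congr_ae (Filter.Eventually.of_forall fun ω => e_decomp i ω)
    · exact ((hAf_int i _ (hf1_int i)).const_mul _).add ((hAf_int i _ (hf1'_int i)).const_mul _)
    · exact (hZ_int i).const_mul _
    · exact (hAf_int i _ (hf1_int i)).const_mul _
    · exact (hAf_int i _ (hf1'_int i)).const_mul _
  -- tail bound
  have tail : ∀ i : Fin m, (∫ ω, Afun α (fun k => G k ω) i
      * (if 0 < G i ω ∧ ε < KL i ω then (1:ℝ) else 0) ∂P) ≤ (P {ω | ε < KL i ω}).toReal := by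
    intro i
    have h1 : (∫ ω, Afun α (fun k => G k ω) i
        * (if 0 < G i ω ∧ ε < KL i ω then (1:ℝ) else 0) ∂P)
        ≤ ∫ ω, (if ε < KL i ω then (1:ℝ) else 0) ∂P := by
      refine integral_mono (hAf_int i _ (hf1'_int i)) (hf3_int i) fun ω => ?_
      by_cases h : 0 < G i ω ∧ ε < KL i ω
      · rw [if_pos h, mul_one, if_pos h.2]
        exact Afun_le_one α (fun k => G k ω) i
      · rw [if_neg h, mul_zero]
        split <;> norm_num
    refine h1.trans (le_of_eq ?_)
    rw [show (fun ω => if ε < KL i ω then (1:ℝ) else 0)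
        = fun ω => ({ω | ε < KL i ω}).indicator (fun _ => (1:ℝ)) ω from
      funext fun ω => by simp [Set.indicator_apply]]
    simpa [measureReal_def] using integral_indicator_const (1:ℝ) (hS3 i)
  -- master bound on the negative side
  have master_int : (∑ i ∈ H0, ((∫ ω, Afun α (fun k => G k ω) i
        * (if G i ω < 0 then (1:ℝ) else 0) ∂P)
        + ∫ ω, Zfun α (fun k => G k ω) i ∂P)) ≤ 1 := by
    have hsum : ∀ ω, (∑ i ∈ H0, (Afun α (fun k => G k ω) i
        * (if G i ω < 0 then (1:ℝ) else 0) + Zfun α (fun k => G k ω) i)) ≤ 1 := by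
      intro ω
      refine le_trans (Finset.sum_le_sum_of_subset_of_nonneg (Finset.subset_univ H0)
        (fun i _ _ => ?_)) ?_
      · have h1 := Afun_nonneg α (fun k => G k ω) i
        have h2 := Zfun_nonneg α (fun k => G k ω) i
        have h3 : (0:ℝ) ≤ (if G i ω < 0 then (1:ℝ) else 0) := by split <;> norm_num
        positivity
      · have h := master α (fun k => G k ω)
        exact h
    have hterm_int : ∀ i ∈ H0, Integrable (fun ω => Afun α (fun k => G k ω) i
        * (if G i ω < 0 then (1:ℝ) else 0) + Zfun α (fun k => G k ω) i) P := fun i _ =>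
      (hAf_int i _ (hf2_int i)).add (hZ_int i)
    calc (∑ i ∈ H0, ((∫ ω, Afun α (fun k => G k ω) i * (if G i ω < 0 then (1:ℝ) else 0) ∂P)
          + ∫ ω, Zfun α (fun k => G k ω) i ∂P))
        = ∑ i ∈ H0, ∫ ω, (Afun α (fun k => G k ω) i * (if G i ω < 0 then (1:ℝ) else 0)
            + Zfun α (fun k => G k ω) i) ∂P := by
          refine Finset.sum_congr rfl fun i _ => ?_
          rw [integral_add (hAf_int i _ (hf2_int i)) (hZ_int i)]
      _ = ∫ ω, (∑ i ∈ H0, (Afun α (fun k => G k ω) i * (if G i ω < 0 then (1:ℝ) else 0)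
            + Zfun α (fun k => G k ω) i)) ∂P := (integral_finset_sum H0 hterm_int).symm
      _ ≤ ∫ ω, (1:ℝ) ∂P := by
          refine integral_mono (integrable_finset_sum H0 hterm_int) (integrable_const 1)
            fun ω => hsum ω
      _ = 1 := by simp
  -- assemble everything
  have hexp1 : (1:ℝ) ≤ Real.exp ε := Real.one_le_exp hε
  have hZnn : ∀ i, 0 ≤ ∫ ω, Zfun α (fun k => G k ω) i ∂P := fun i =>
    integral_nonneg fun ω => Zfun_nonneg α (fun k => G k ω) i
  have hCnn : ∀ i, 0 ≤ ∫ ω, Afun α (fun k => G k ω) i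
      * (if G i ω < 0 then (1:ℝ) else 0) ∂P := fun i =>
    integral_nonneg fun ω => mul_nonneg (Afun_nonneg α (fun k => G k ω) i)
      (by split <;> norm_num)
  calc (∫ ω, ∑ i ∈ H0, mirrorEValue α (fun k => G k ω) i ∂P)
      = ∑ i ∈ H0, ∫ ω, mirrorEValue α (fun k => G k ω) i ∂P :=
        integral_finset_sum H0 fun i _ => he_int i
    _ ≤ ∑ i ∈ H0, ((m:ℝ) * (Real.exp ε * ∫ ω, Afun α (fun k => G k ω) i
          * (if G i ω < 0 then (1:ℝ) else 0) ∂P)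
        + (m:ℝ) * (P {ω | ε < KL i ω}).toReal
        + (m:ℝ) * (∫ ω, Zfun α (fun k => G k ω) i ∂P)) := by
        refine Finset.sum_le_sum fun i hi => ?_
        rw [int_decomp i]
        have h1 := key i hi
        have h2 := tail i
        have hmn : (0:ℝ) ≤ (m:ℝ) := Nat.cast_nonneg m
        have := mul_le_mul_of_nonneg_left h1 hmn
        have := mul_le_mul_of_nonneg_left h2 hmn
        linarith
    _ ≤ ∑ i ∈ H0, ((m:ℝ) * Real.exp ε * ((∫ ω, Afun α (fun k => G k ω) i
          * (if G i ω < 0 then (1:ℝ) else 0) ∂P) + ∫ ω, Zfun α (fun k => G k ω) i ∂P)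
        + (m:ℝ) * (P {ω | ε < KL i ω}).toReal) := by
        refine Finset.sum_le_sum fun i hi => ?_
        have hmn : (0:ℝ) ≤ (m:ℝ) := Nat.cast_nonneg m
        nlinarith [mul_nonneg (mul_nonneg hmn (sub_nonneg.2 hexp1)) (hZnn i)]
    _ = (m:ℝ) * Real.exp ε * (∑ i ∈ H0, ((∫ ω, Afun α (fun k => G k ω) i
          * (if G i ω < 0 then (1:ℝ) else 0) ∂P) + ∫ ω, Zfun α (fun k => G k ω) i ∂P))
        + (m:ℝ) * ∑ i ∈ H0, (P {ω | ε < KL i ω}).toReal := by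
        rw [Finset.sum_add_distrib, ← Finset.mul_sum, ← Finset.mul_sum]
    _ ≤ (m:ℝ) * Real.exp ε * 1 + (m:ℝ) * ∑ i ∈ H0, (P {ω | ε < KL i ω}).toReal := by
        have hmn : (0:ℝ) ≤ (m:ℝ) * Real.exp ε :=
          mul_nonneg (Nat.cast_nonneg m) (Real.exp_nonneg ε)
        have := mul_le_mul_of_nonneg_left master_int hmn
        linarith
    _ = (m:ℝ) * (Real.exp ε + ∑ i ∈ H0, (P {ω | ε < KL i ω}).toReal) := by ring
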